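/- Every λ ∈ ℂ with |λ − 1| < 1 is an eigenvalue of the Hilbert-space adjoint C* of the Cesàro operator on ℓ²(ℕ, ℂ): for each such λ there exists a nonzero b ∈ ℓ² with C* b = λ b. -/

import Mathlib

open scoped ComplexConjugate ENNReal NNReal

/-- `C` is the Cesàro operator on `ℓ²(ℕ, ℂ)`: `(C a)ₙ = (1/(n+1)) ∑_{k=0}^{n} a_k`. -/
def IsCesaro (C : lp (fun _ : ℕ => ℂ) 2 →L[ℂ] lp (fun _ : ℕ => ℂ) 2) : Prop :=
  ∀ (a : lp (fun _ : ℕ => ℂ) 2) (n : ℕ),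
    C a n = (∑ k ∈ Finset.range (n + 1), a k) / (n + 1)

private lemma telescope_aux (K : ℕ) : ∀ n, K ≤ n →
    (∏ k ∈ Finset.Ico K n, (((k : ℝ) + 1) / ((k : ℝ) + 2))) = ((K : ℝ) + 1) / ((n : ℝ) + 1) := by
  intro n hn
  induction n, hn using Nat.le_induction with
  | base =>
    have h : ((K:ℝ)+1) ≠ 0 := by positivity
    simp [div_self h]
  | succ n hn ih =>
    rw [Finset.prod_Ico_succ_top hn, ih]
    have h1 : ((n : ℝ) + 1) ≠ 0 := by positivity
    have h2 : ((n : ℝ) + 2) ≠ 0 := by positivity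
    push_cast
    field_simp
    ring

private lemma re_inv_gt (μ : ℂ) (hμ : ‖μ - 1‖ < 1) :
    μ ≠ 0 ∧ 1/2 < (μ⁻¹).re := by
  have hμ0 : μ ≠ 0 := by
    rintro rfl
    simp at hμ
  have hn : Complex.normSq (μ - 1) < 1 := by
    rw [← Complex.sq_norm]
    nlinarith [norm_nonneg (μ - 1)]
  have hlt : μ.re * μ.re + μ.im * μ.im < 2 * μ.re := by
    have := hn
    simp [Complex.normSq_apply, Complex.sub_re, Complex.sub_im] at this
    nlinarith
  refine ⟨hμ0, ?_⟩
  have hpos : 0 < Complex.normSq μ := Complex.normSq_pos.2 hμ0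
  rw [Complex.inv_re, lt_div_iff₀ hpos]
  simp [Complex.normSq_apply]
  nlinarith

private lemma norm_factor_sq (s : ℂ) (k : ℕ) :
    ‖(1:ℂ) - s / ((k:ℂ)+1)‖^2
      = 1 - 2*s.re/((k:ℝ)+1) + Complex.normSq s/((k:ℝ)+1)^2 := by
  have hne : ((k:ℝ)+1) ≠ 0 := by positivity
  have hx : ((k:ℂ)+1) = ((((k:ℝ)+1) : ℝ) : ℂ) := by push_cast; ring
  rw [Complex.sq_norm, hx, div_eq_inv_mul, ← Complex.ofReal_inv,
    Complex.normSq_apply]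
  simp [Complex.sub_re, Complex.sub_im, Complex.re_ofReal_mul, Complex.im_ofReal_mul,
    Complex.normSq_apply]
  field_simp
  ring

private lemma factor_le (s : ℂ) (t : ℝ) (ht0 : 1/2 ≤ t) (ht2 : t < s.re) (K : ℕ)
    (hK : Complex.normSq s / (s.re - t) ≤ K) {k : ℕ} (hk : K ≤ k) :
    ‖(1:ℂ) - s/((k:ℂ)+1)‖^2 ≤ (((k:ℝ)+1)/((k:ℝ)+2))^(2*t) := by
  set x : ℝ := (k:ℝ)+1 with hxdef
  have hx1 : (1:ℝ) ≤ x := by simp [hxdef]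
  have hx0 : (0:ℝ) < x := by linarith
  have hst : 0 < s.re - t := by linarith
  have hMx : Complex.normSq s ≤ (s.re - t) * x := by
    have hKx : (K:ℝ) ≤ x := by
      simp only [hxdef]
      have : (K:ℝ) ≤ (k:ℝ) := by exact_mod_cast hk
      linarith
    have := (div_le_iff₀ hst).1 (hK.trans hKx)
    linarith [this]
  -- Bernoulli: 1 - 2t/(x+1) ≤ (x/(x+1))^(2t)
  have hb : 1 - 2*t/(x+1) ≤ (x/(x+1))^(2*t) := by
    have h1 : (-1:ℝ) ≤ -(x+1)⁻¹ := by
      have : (x+1)⁻¹ ≤ 1 := by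
        rw [inv_le_one_iff₀]; right; linarith
      linarith
    have h2 : (1:ℝ) ≤ 2*t := by linarith
    have := one_add_mul_self_le_rpow_one_add h1 h2
    have he : (1:ℝ) + -(x+1)⁻¹ = x/(x+1) := by field_simp; ring
    rw [he] at this
    convert this using 1
    field_simp
    ring
  have hx2 : (k:ℝ)+2 = x+1 := by rw [hxdef]; ring
  rw [hx2]
  refine le_trans ?_ hb
  rw [norm_factor_sq]
  rw [← hxdef]
  -- 1 - 2σ/x + M/x² ≤ 1 - 2t/(x+1)
  have hσt : 0 < s.re + t := by linarith
  have key : Complex.normSq s * (x*(x+1)) ≤ (2*s.re*(x+1) - 2*t*x) * x^2 := by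
    have h4 := mul_le_mul_of_nonneg_right hMx (by positivity : (0:ℝ) ≤ x*(x+1))
    nlinarith [h4, mul_nonneg (mul_nonneg hst.le hx0.le) (sq_nonneg x),
      mul_nonneg hσt.le (sq_nonneg x)]
  have h3 : Complex.normSq s / x^2 ≤ 2*s.re/x - 2*t/(x+1) := by
    rw [div_sub_div _ _ (ne_of_gt hx0) (by linarith : x+1 ≠ 0),
      div_le_div_iff₀ (by positivity) (by positivity)]
    nlinarith [key]
  linarith

private lemma b_summable (s : ℂ) (hσ : 1/2 < s.re) :
    Summable (fun n => ‖(∏ k ∈ Finset.range n, ((1:ℂ) - s/((k:ℂ)+1)))‖^2) := by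
  set f : ℕ → ℂ := fun k => (1:ℂ) - s/((k:ℂ)+1) with hf
  set b : ℕ → ℂ := fun n => ∏ k ∈ Finset.range n, f k with hb
  set t : ℝ := s.re/2 + 1/4 with ht
  have ht0 : 1/2 ≤ t := by rw [ht]; linarith
  have ht2 : t < s.re := by rw [ht]; linarith
  have h2t : 1 < 2*t := by rw [ht]; linarith
  obtain ⟨K, hK⟩ := exists_nat_ge (Complex.normSq s / (s.re - t))
  set Cst : ℝ := ‖b K‖^2 * ((K:ℝ)+1)^(2*t) with hCst
  have hbound : ∀ m : ℕ, ‖b (m+K)‖^2 ≤ Cst * ((m:ℝ)+1)^(-(2*t)) := by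
    intro m
    have hKn : K ≤ m + K := Nat.le_add_left K m
    have hsplit : b (m+K) = b K * ∏ k ∈ Finset.Ico K (m+K), f k :=
      (Finset.prod_range_mul_prod_Ico f hKn).symm
    have h1 : ‖b (m+K)‖^2 = ‖b K‖^2 * ∏ k ∈ Finset.Ico K (m+K), ‖f k‖^2 := by
      rw [hsplit, norm_mul, mul_pow]
      congr 1
      rw [norm_prod, ← Finset.prod_pow]
    rw [h1]
    have h2 : ∏ k ∈ Finset.Ico K (m+K), ‖f k‖^2
        ≤ ∏ k ∈ Finset.Ico K (m+K), (((k:ℝ)+1)/((k:ℝ)+2))^(2*t) := by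
      apply Finset.prod_le_prod
      · intro i _; positivity
      · intro i hi
        exact factor_le s t ht0 ht2 K hK (Finset.mem_Ico.1 hi).1
    have h3 : ∏ k ∈ Finset.Ico K (m+K), (((k:ℝ)+1)/((k:ℝ)+2))^(2*t)
        = (((K:ℝ)+1)/(((m+K:ℕ):ℝ)+1))^(2*t) := by
      rw [Real.finset_prod_rpow _ _ (fun i _ => by positivity) (2*t),
        telescope_aux K (m+K) hKn]
    have h4 : (((K:ℝ)+1)/(((m+K:ℕ):ℝ)+1))^(2*t)
        ≤ ((K:ℝ)+1)^(2*t) * ((m:ℝ)+1)^(-(2*t)) := by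
      rw [Real.div_rpow (by positivity) (by positivity)]
      rw [div_eq_mul_inv, ← Real.rpow_neg (by positivity)]
      apply mul_le_mul_of_nonneg_left _ (by positivity)
      apply Real.rpow_le_rpow_of_nonpos (by positivity)
      · push_cast; linarith
      · linarith
    calc ‖b K‖^2 * ∏ k ∈ Finset.Ico K (m+K), ‖f k‖^2
        ≤ ‖b K‖^2 * ((((K:ℝ)+1)/(((m+K:ℕ):ℝ)+1))^(2*t)) := by
          rw [← h3]; exact mul_le_mul_of_nonneg_left h2 (by positivity)
      _ ≤ ‖b K‖^2 * (((K:ℝ)+1)^(2*t) * ((m:ℝ)+1)^(-(2*t))) :=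
          mul_le_mul_of_nonneg_left h4 (by positivity)
      _ = Cst * ((m:ℝ)+1)^(-(2*t)) := by rw [hCst]; ring
  rw [← summable_nat_add_iff K]
  apply Summable.of_nonneg_of_le (fun m => by positivity) hbound
  apply Summable.mul_left
  have hs : Summable (fun n : ℕ => (n:ℝ)^(-(2*t))) := Real.summable_nat_rpow.2 (by linarith)
  have := (summable_nat_add_iff 1).2 hs
  apply this.congr
  intro m
  push_cast
  ring_nf

local notation "⟪" x ", " y "⟫" => @inner ℂ _ _ x y

/-- every `μ` with `|μ - 1| < 1` is an eigenvalue of the Hilbert-space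
adjoint `C*` of the Cesàro operator on ℓ². -/
theorem stmt_12 (C : lp (fun _ : ℕ => ℂ) 2 →L[ℂ] lp (fun _ : ℕ => ℂ) 2)
    (hC : IsCesaro C) (μ : ℂ) (hμ : ‖μ - 1‖ < 1) :
    ∃ b : lp (fun _ : ℕ => ℂ) 2, b ≠ 0 ∧ ContinuousLinearMap.adjoint C b = μ • b := by
  obtain ⟨hμ0, hσ⟩ := re_inv_gt μ hμ
  set s : ℂ := μ⁻¹ with hs
  set b : ℕ → ℂ := fun n => ∏ k ∈ Finset.range n, ((1:ℂ) - s/((k:ℂ)+1)) with hbdef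
  have hsum2 : Summable (fun n => ‖b n‖^2) := b_summable s hσ
  -- membership in ℓ²
  have hmem : Memℓp b 2 := by
    apply memℓp_gen
    have h2 : (2 : ℝ≥0∞).toReal = (2:ℝ) := by simp
    simp only [h2, Real.rpow_two]
    exact hsum2
  set B : lp (fun _ : ℕ => ℂ) 2 := ⟨b, hmem⟩ with hBdef
  have hBcoe : ∀ n, B n = b n := fun n => rfl
  have hb0 : b 0 = 1 := by simp [hbdef]
  have hBne : B ≠ 0 := by
    intro h
    have h0 : B 0 = (0 : lp (fun _ : ℕ => ℂ) 2) 0 := by rw [h]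
    rw [hBcoe 0, hb0] at h0
    simp at h0
  refine ⟨B, hBne, ?_⟩
  -- recurrence
  have hrec : ∀ n, b (n+1) = b n * ((1:ℂ) - s/((n:ℂ)+1)) := by
    intro n
    simp [hbdef, Finset.prod_range_succ]
  set g : ℕ → ℂ := fun m => b m / ((m:ℂ)+1) with hgdef
  have hμb : ∀ n, g n = μ * b n - μ * b (n+1) := by
    intro n
    have hne : ((n:ℂ)+1) ≠ 0 := by
      have := Nat.cast_add_one_ne_zero (R := ℂ) n
      exact_mod_cast this
    rw [hgdef]
    simp only
    rw [hrec n, hs]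
    field_simp
    ring
  -- summability of g
  have hinv2 : Summable (fun m : ℕ => (((m:ℝ)+1)⁻¹)^2) := by
    have hsr : Summable (fun n : ℕ => (n:ℝ)^(-(2:ℝ))) := Real.summable_nat_rpow.2 (by norm_num)
    have := (summable_nat_add_iff 1).2 hsr
    apply this.congr
    intro m
    rw [Real.rpow_neg (by positivity), Real.rpow_two, inv_pow]
    push_cast
    ring_nf
  have hnorm_g : ∀ m : ℕ, ‖g m‖ = ‖b m‖ * ((m:ℝ)+1)⁻¹ := by
    intro m
    have hx : ((m:ℂ)+1) = ((m+1:ℕ):ℂ) := by push_cast; ring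
    rw [hgdef]
    simp only
    rw [norm_div, hx, Complex.norm_natCast, div_eq_mul_inv]
    push_cast
    ring
  have hg : Summable g := by
    apply Summable.of_norm
    apply Summable.of_nonneg_of_le (fun m => norm_nonneg _)
      (f := fun m => (‖b m‖^2 + (((m:ℝ)+1)⁻¹)^2)/2)
    · intro m
      rw [hnorm_g m]
      nlinarith [sq_nonneg (‖b m‖ - ((m:ℝ)+1)⁻¹)]
    · exact (hsum2.add hinv2).div_const 2
  -- tail sums
  set S : ℕ → ℂ := fun n => ∑' k, g (k + n) with hSdef
  have hgn : ∀ n, Summable fun k => g (k + n) := fun n => (summable_nat_add_iff n).2 hg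
  have hSrec : ∀ n, S n = g n + S (n+1) := by
    intro n
    have h0 := Summable.tsum_eq_zero_add (hgn n)
    rw [hSdef]
    simp only
    rw [h0, zero_add]
    congr 1
    apply tsum_congr
    intro k
    congr 1
    omega
  have hS0 : Filter.Tendsto S Filter.atTop (nhds 0) := tendsto_sum_nat_add g
  have hb_lim : Filter.Tendsto (fun n => μ * b n) Filter.atTop (nhds 0) := by
    have h1 : Filter.Tendsto (fun n => ‖b n‖^2) Filter.atTop (nhds 0) :=
      hsum2.tendsto_atTop_zero
    have h2 : Filter.Tendsto (fun n => ‖b n‖) Filter.atTop (nhds 0) := by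
      have h3 := (Real.continuous_sqrt.tendsto 0).comp h1
      simp only [Function.comp_def, Real.sqrt_zero] at h3
      refine h3.congr fun n => ?_
      exact Real.sqrt_sq (norm_nonneg _)
    have h3 : Filter.Tendsto b Filter.atTop (nhds 0) :=
      tendsto_zero_iff_norm_tendsto_zero.2 h2
    simpa using h3.const_mul μ
  have hkey : ∀ n, S n = μ * b n := by
    have hconst : ∀ n, S n - μ * b n = S 0 - μ * b 0 := by
      intro n
      induction n with
      | zero => rfl
      | succ n ih =>
        rw [← ih]
        have h1 := hSrec n
        have h2 := hμb n
        linear_combination -h1 - h2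
    have hlim : Filter.Tendsto (fun n => S n - μ * b n) Filter.atTop (nhds 0) := by
      simpa using hS0.sub hb_lim
    have hzero : S 0 - μ * b 0 = 0 := by
      have heq : (fun n => S n - μ * b n) = fun _ => S 0 - μ * b 0 := funext hconst
      rw [heq] at hlim
      exact tendsto_nhds_unique tendsto_const_nhds hlim
    intro n
    have := hconst n
    rw [hzero] at this
    exact sub_eq_zero.1 this
  -- coordinates of C applied to single
  have hCs : ∀ n m : ℕ, C (lp.single 2 n (1:ℂ)) m = if n ≤ m then ((m:ℂ)+1)⁻¹ else 0 := by
    intro n m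
    rw [hC]
    have hsum : (∑ k ∈ Finset.range (m+1), lp.single 2 n (1:ℂ) k)
        = if n ≤ m then (1:ℂ) else 0 := by
      by_cases hnm : n ≤ m
      · rw [if_pos hnm]
        rw [Finset.sum_eq_single n]
        · exact lp.single_apply_self (E := fun _ : ℕ => ℂ) 2 n (1:ℂ)
        · intro k _ hk
          exact lp.single_apply_ne (E := fun _ : ℕ => ℂ) 2 n (1:ℂ) hk
        · intro h
          exact absurd (Finset.mem_range.2 (by omega)) h
      · rw [if_neg hnm]
        apply Finset.sum_eq_zero
        intro k hk
        have : k ≠ n := by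
          have := Finset.mem_range.1 hk
          omega
        exact lp.single_apply_ne (E := fun _ : ℕ => ℂ) 2 n (1:ℂ) this
    rw [hsum]
    split_ifs <;> simp [one_div]
  -- the eigenvalue equation
  apply lp.ext
  funext n
  have hL : (ContinuousLinearMap.adjoint C B) n
      = ⟪lp.single 2 n (1:ℂ), ContinuousLinearMap.adjoint C B⟫ := by
    rw [lp.inner_single_left]
    simp [RCLike.inner_apply]
  have hR : (μ • B) n = μ * b n := by
    rw [lp.coeFn_smul]
    simp [hBcoe, smul_eq_mul]
  show (ContinuousLinearMap.adjoint C B) n = (μ • B) n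
  rw [hL, hR, ContinuousLinearMap.adjoint_inner_right, lp.inner_eq_tsum]
  have hterm : ∀ m, ⟪(C (lp.single 2 n (1:ℂ))) m, B m⟫ = (if n ≤ m then g m else 0) := by
    intro m
    rw [RCLike.inner_apply, hCs n m, hBcoe]
    split_ifs with h
    · have : (starRingEnd ℂ) (((m:ℂ)+1)⁻¹) = ((m:ℂ)+1)⁻¹ := by
        rw [map_inv₀, map_add, map_one, Complex.conj_natCast]
      rw [this, hgdef]
      simp only
      rw [div_eq_mul_inv]
    · simp
  rw [tsum_congr hterm]
  have hre : (∑' m, (if n ≤ m then g m else 0)) = S n := by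
    rw [hSdef]
    simp only
    rw [← Function.Injective.tsum_eq (g := fun k => k + n) (add_left_injective n)
      (f := fun m => if n ≤ m then g m else 0) ?_]
    · apply tsum_congr
      intro k
      rw [if_pos (Nat.le_add_left n k)]
    · intro m hm
      simp only [Function.mem_support, ne_eq, ite_eq_right_iff, not_forall] at hm
      obtain ⟨hnm, -⟩ := hm
      exact ⟨m - n, show m - n + n = m by omega⟩
  rw [hre, hkey n]
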